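/- Let X be a subshift over Σ in dimension 2 defined by a finite family of forbidden patterns. If X contains a configuration c with periodicity vector (m,n) where m ≥ n > 0 and m,n are integers, then X contains a configuration c' that is fully periodic, i.e., Γ_{c'} has finite index in ℤ². -/

import Mathlib

/-- A 2D SFT containing a configuration with periodicity vector `(m,n)`,
`m ≥ n > 0`, contains a fully periodic configuration. -/
theorem sft_per_vector_imp_fully_periodic {A : Type*} [Fintype A]
    (D : Finset (ℤ × ℤ)) (F : Set ({p : ℤ × ℤ // p ∈ D} → A))
    (X : Set ((ℤ × ℤ) → A))
    (hX : X = {c | ∀ t : ℤ × ℤ, (fun z : {p : ℤ × ℤ // p ∈ D} => c (t + z.1)) ∉ F})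
    (m n : ℤ) (hn : 0 < n) (hnm : n ≤ m)
    (c : (ℤ × ℤ) → A) (hc : c ∈ X) (hper : ∀ z, c (z + (m, n)) = c z) :
    ∃ c' ∈ X, ∃ p : ℤ, 0 < p ∧
      (∀ z, c' (z + (p, 0)) = c' z) ∧ (∀ z, c' (z + (0, p)) = c' z) := by
  classical
  subst hX
  have hm : 0 < m := lt_of_lt_of_le hn hnm
  -- bound on the support D
  set R : ℤ := D.sum (fun z => |z.1| + |z.2|) with hRdef
  have hR0 : 0 ≤ R := Finset.sum_nonneg (fun z _ => by positivity)
  have hRb : ∀ z ∈ D, |z.1| ≤ R ∧ |z.2| ≤ R := by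
    intro z hz
    have hs : |z.1| + |z.2| ≤ R :=
      Finset.single_le_sum (f := fun z : ℤ × ℤ => |z.1| + |z.2|)
        (fun i _ => by positivity) hz
    constructor
    · have := abs_nonneg z.2; linarith
    · have := abs_nonneg z.1; linarith
  set L : ℤ := (m + 1) * (2 * R + 1) with hLdef
  have hL0 : 0 < L := by positivity
  -- iterated periodicity
  have hper1 : ∀ x y : ℤ, c (x + m, y + n) = c (x, y) := by
    intro x y
    have := hper (x, y)
    simpa using this
  have hperZ : ∀ t : ℤ, ∀ x y : ℤ, c (x + t * m, y + t * n) = c (x, y) := by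
    intro t
    induction t using Int.induction_on with
    | zero => simp
    | succ k ih =>
      intro x y
      have h2 := hper1 (x + (k : ℤ) * m) (y + (k : ℤ) * n)
      rw [show x + ((k : ℤ) + 1) * m = x + (k : ℤ) * m + m by ring,
        show y + ((k : ℤ) + 1) * n = y + (k : ℤ) * n + n by ring, h2]
      exact ih x y
    | pred k ih =>
      intro x y
      have h2 := hper1 (x + (-(k : ℤ) - 1) * m) (y + (-(k : ℤ) - 1) * n)
      rw [show x + (-(k : ℤ) - 1) * m + m = x + (-(k : ℤ)) * m by ring,
        show y + (-(k : ℤ) - 1) * n + n = y + (-(k : ℤ)) * n by ring] at h2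
      exact h2.symm.trans (ih x y)
  -- pigeonhole on blocks of size (L+1) × (n+1)
  obtain ⟨a₁, a₂, hne, hg⟩ := Finite.exists_ne_map_eq_of_infinite
    (fun k : ℤ => (fun p : ↥(Finset.Icc (0:ℤ) L ×ˢ Finset.Icc (0:ℤ) n) =>
      c (k + p.1.1, p.1.2)))
  obtain ⟨k1, k2, hk, hgeq⟩ : ∃ k1 k2 : ℤ, k1 < k2 ∧
      ∀ i j : ℤ, 0 ≤ i → i ≤ L → 0 ≤ j → j ≤ n → c (k1 + i, j) = c (k2 + i, j) := by
    rcases lt_or_gt_of_ne hne with h | h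
    · refine ⟨a₁, a₂, h, fun i j h1 h2 h3 h4 => ?_⟩
      have := congrFun hg ⟨(i, j), by
        simp only [Finset.mem_product, Finset.mem_Icc]; exact ⟨⟨h1, h2⟩, ⟨h3, h4⟩⟩⟩
      simpa using this
    · refine ⟨a₂, a₁, h, fun i j h1 h2 h3 h4 => ?_⟩
      have := congrFun hg ⟨(i, j), by
        simp only [Finset.mem_product, Finset.mem_Icc]; exact ⟨⟨h1, h2⟩, ⟨h3, h4⟩⟩⟩
      simpa using this.symm
  set q : ℤ := k2 - k1 with hqdef
  have hq0 : 0 < q := by omega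
  have hmodadd : ∀ a : ℤ, (a + q) % q = a % q := by
    intro a; rw [show a + q = a + 1 * q by ring, Int.add_mul_emod_self_right]
  have hmodsub : ∀ a : ℤ, (a - q) % q = a % q := by
    intro a; rw [show a - q = a + (-1) * q by ring, Int.add_mul_emod_self_right]
  have hq1 : ∀ i j : ℤ, 0 ≤ i → i ≤ L → 0 ≤ j → j < n →
      c (k1 + i, j) = c (k1 + q + i, j) := by
    intro i j h1 h2 h3 h4
    have := hgeq i j h1 h2 h3 h4.le
    rwa [show k2 + i = k1 + q + i by omega] at this
  -- local q-periodicity inside the strip, reduced form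
  have key : ∀ s : ℕ, ∀ i : ℤ, i.toNat ≤ s → 0 ≤ i → i ≤ L + q →
      ∀ j : ℤ, 0 ≤ j → j < n → c (k1 + i, j) = c (k1 + i % q, j) := by
    intro s
    induction s with
    | zero =>
      intro i hs h1 h2 j hj1 hj2
      have : i = 0 := by omega
      subst this
      simp [Int.zero_emod]
    | succ s ih =>
      intro i hs h1 h2 j hj1 hj2
      by_cases hlt : i < q
      · rw [Int.emod_eq_of_lt h1 hlt]
      · push_neg at hlt
        have e1 := hq1 (i - q) j (by omega) (by omega) hj1 hj2
        rw [show k1 + q + (i - q) = k1 + i by ring] at e1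
        have e2 := ih (i - q) (by omega) (by omega) (by omega) j hj1 hj2
        rw [← e1, e2, hmodsub]
  have hq2 : ∀ i : ℤ, 0 ≤ i → i ≤ L + q → ∀ j : ℤ, 0 ≤ j → j < n →
      c (k1 + i, j) = c (k1 + i % q, j) := fun i h1 h2 j hj1 hj2 =>
    key i.toNat i le_rfl h1 h2 j hj1 hj2
  -- the band lemma
  have hA : ∀ u w y : ℤ, u % q = w % q →
      0 ≤ u - m * (y / n) - k1 → u - m * (y / n) - k1 ≤ L + q →
      0 ≤ w - m * (y / n) - k1 → w - m * (y / n) - k1 ≤ L + q →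
      c (u, y) = c (w, y) := by
    intro u w y hmod h1 h2 h3 h4
    have hj1 : 0 ≤ y % n := Int.emod_nonneg y (ne_of_gt hn)
    have hj2 : y % n < n := Int.emod_lt_of_pos y hn
    have hy : y % n + (y / n) * n = y := Int.emod_add_ediv_mul y n
    have hu : c (u, y) = c (u - (y / n) * m, y % n) := by
      have h5 := hperZ (y / n) (u - (y / n) * m) (y % n)
      rw [show u - (y / n) * m + (y / n) * m = u by ring, hy] at h5
      exact h5
    have hw : c (w, y) = c (w - (y / n) * m, y % n) := by
      have h5 := hperZ (y / n) (w - (y / n) * m) (y % n)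
      rw [show w - (y / n) * m + (y / n) * m = w by ring, hy] at h5
      exact h5
    have e1 := hq2 (u - (y / n) * m - k1) (by linarith [mul_comm m (y / n)])
      (by linarith [mul_comm m (y / n)]) (y % n) hj1 hj2
    have e2 := hq2 (w - (y / n) * m - k1) (by linarith [mul_comm m (y / n)])
      (by linarith [mul_comm m (y / n)]) (y % n) hj1 hj2
    rw [show k1 + (u - (y / n) * m - k1) = u - (y / n) * m by ring] at e1
    rw [show k1 + (w - (y / n) * m - k1) = w - (y / n) * m by ring] at e2
    have hmm : (u - (y / n) * m - k1) % q = (w - (y / n) * m - k1) % q := by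
      rw [show u - (y / n) * m - k1 = u - ((y / n) * m + k1) by ring,
        show w - (y / n) * m - k1 = w - ((y / n) * m + k1) by ring,
        Int.sub_emod, hmod, ← Int.sub_emod]
    rw [hu, hw, e1, e2, hmm]
  -- the fully periodic configuration
  set c' : (ℤ × ℤ) → A := fun z =>
    c (k1 + m * (z.2 / n) + (z.1 - m * (z.2 / n) - k1) % q, z.2) with hc'def
  have hH : ∀ x y : ℤ, c' (x + q, y) = c' (x, y) := by
    intro x y
    show c (k1 + m * (y / n) + (x + q - m * (y / n) - k1) % q, y) =
      c (k1 + m * (y / n) + (x - m * (y / n) - k1) % q, y)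
    rw [show x + q - m * (y / n) - k1 = (x - m * (y / n) - k1) + q by ring, hmodadd]
  have hD : ∀ x y : ℤ, c' (x + m, y + n) = c' (x, y) := by
    intro x y
    have hdiv : (y + n) / n = y / n + 1 := by
      have := Int.add_mul_ediv_right y 1 (ne_of_gt hn)
      rw [one_mul] at this
      omega
    show c (k1 + m * ((y + n) / n) + (x + m - m * ((y + n) / n) - k1) % q, y + n) =
      c (k1 + m * (y / n) + (x - m * (y / n) - k1) % q, y)
    rw [hdiv, show x + m - m * (y / n + 1) - k1 = x - m * (y / n) - k1 by ring,
      show k1 + m * (y / n + 1) + (x - m * (y / n) - k1) % q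
        = k1 + m * (y / n) + (x - m * (y / n) - k1) % q + m by ring]
    exact hper1 _ y
  -- iterated periods of c'
  have hHk : ∀ k : ℕ, ∀ x y : ℤ, c' (x + (k : ℤ) * q, y) = c' (x, y) := by
    intro k
    induction k with
    | zero => simp
    | succ k ih =>
      intro x y
      rw [show x + ((k : ℕ) + 1 : ℕ) * q = x + (k : ℤ) * q + q by push_cast; ring,
        hH, ih]
  have hDk : ∀ k : ℕ, ∀ x y : ℤ, c' (x + (k : ℤ) * m, y + (k : ℤ) * n) = c' (x, y) := by
    intro k
    induction k with
    | zero => simp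
    | succ k ih =>
      intro x y
      rw [show x + ((k : ℕ) + 1 : ℕ) * m = x + (k : ℤ) * m + m by push_cast; ring,
        show y + ((k : ℕ) + 1 : ℕ) * n = y + (k : ℤ) * n + n by push_cast; ring,
        hD, ih]
  refine ⟨c', ?_, q * n, mul_pos hq0 hn, ?_, ?_⟩
  · -- c' belongs to X
    intro t
    obtain ⟨a, b⟩ := t
    intro hF
    set tlo : ℤ := (b - R) / n with htlo
    set thi : ℤ := (b + R) / n with hthi
    have hmono : tlo ≤ thi := Int.ediv_le_ediv hn (by linarith)
    have hdiff : thi ≤ tlo + 2 * R := by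
      have h1 : b - R < (tlo + 1) * n := Int.lt_ediv_add_one_mul_self _ hn
      have h2 : thi < tlo + 2 * R + 1 := by
        rw [hthi, Int.ediv_lt_iff_lt_mul hn]
        nlinarith [mul_le_mul_of_nonneg_left hn.le (by linarith : (0:ℤ) ≤ 2 * R)]
      omega
    set A0 : ℤ := a - R - m * thi with hA0def
    set ν : ℤ := (A0 - k1) / q with hν
    have hoffeq : A0 - q * ν - k1 = (A0 - k1) % q := by
      have h6 := Int.mul_ediv_add_emod (A0 - k1) q
      rw [← hν] at h6
      omega
    have hoff1 : 0 ≤ (A0 - k1) % q := Int.emod_nonneg _ (ne_of_gt hq0)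
    have hoff2 : (A0 - k1) % q < q := Int.emod_lt_of_pos _ hq0
    have hpat : (fun z : {p : ℤ × ℤ // p ∈ D} => c' ((a, b) + z.1)) =
        (fun z : {p : ℤ × ℤ // p ∈ D} => c ((a - q * ν, b) + z.1)) := by
      funext z
      obtain ⟨⟨z1, z2⟩, hz⟩ := z
      obtain ⟨hz1, hz2⟩ := hRb _ hz
      rw [abs_le] at hz1 hz2
      show c' (a + z1, b + z2) = c (a - q * ν + z1, b + z2)
      set y : ℤ := b + z2 with hy
      set ty : ℤ := y / n with hty
      have hty1 : tlo ≤ ty := Int.ediv_le_ediv hn (by omega)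
      have hty2 : ty ≤ thi := Int.ediv_le_ediv hn (by omega)
      show c (k1 + m * ty + (a + z1 - m * ty - k1) % q, y) = c (a - q * ν + z1, y)
      have hr1 : 0 ≤ (a + z1 - m * ty - k1) % q := Int.emod_nonneg _ (ne_of_gt hq0)
      have hr2 : (a + z1 - m * ty - k1) % q < q := Int.emod_lt_of_pos _ hq0
      have hband1 : 0 ≤ a + z1 - m * ty - A0 := by
        have : m * ty ≤ m * thi := mul_le_mul_of_nonneg_left hty2 hm.le
        rw [hA0def]; omega
      have hband2 : a + z1 - m * ty - A0 ≤ L := by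
        have h3 : m * tlo ≤ m * ty := mul_le_mul_of_nonneg_left hty1 hm.le
        have h4 : m * thi ≤ m * tlo + m * (2 * R) := by
          have := mul_le_mul_of_nonneg_left hdiff hm.le
          rw [mul_add] at this
          omega
        have h5 : 2 * R + m * (2 * R) ≤ L := by rw [hLdef]; nlinarith
        rw [hA0def]; omega
      apply hA
      · -- same residue mod q
        rw [show k1 + m * ty + (a + z1 - m * ty - k1) % q
            = (k1 + m * ty) + (a + z1 - m * ty - k1) % q by ring,
          Int.add_emod, Int.emod_emod_of_dvd _ dvd_rfl, ← Int.add_emod,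
          show k1 + m * ty + (a + z1 - m * ty - k1) = a + z1 by ring,
          show a - q * ν + z1 = (a + z1) + (-ν) * q by ring, Int.add_mul_emod_self_right]
      · rw [show k1 + m * ty + (a + z1 - m * ty - k1) % q - m * (y / n) - k1
            = (a + z1 - m * ty - k1) % q by rw [← hty]; ring]
        exact hr1
      · rw [show k1 + m * ty + (a + z1 - m * ty - k1) % q - m * (y / n) - k1
            = (a + z1 - m * ty - k1) % q by rw [← hty]; ring]
        omega
      · rw [show a - q * ν + z1 - m * (y / n) - k1
            = (a + z1 - m * ty - A0) + (A0 - q * ν - k1) by rw [← hty]; ring]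
        omega
      · rw [show a - q * ν + z1 - m * (y / n) - k1
            = (a + z1 - m * ty - A0) + (A0 - q * ν - k1) by rw [← hty]; ring]
        omega
    exact hc (a - q * ν, b) (hpat ▸ hF)
  · -- horizontal period q*n
    intro z
    obtain ⟨x, y⟩ := z
    rw [show ((x, y) : ℤ × ℤ) + (q * n, 0) = (x + q * n, y) by simp]
    rw [show x + q * n = x + ((n.toNat : ℤ)) * q by
      rw [Int.toNat_of_nonneg hn.le]; ring]
    exact hHk n.toNat x y
  · -- vertical period q*n
    intro z
    obtain ⟨x, y⟩ := z
    rw [show ((x, y) : ℤ × ℤ) + (0, q * n) = (x, y + q * n) by simp]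
    have e1 := hHk m.toNat x (y + q * n)
    have e2 := hDk q.toNat x y
    rw [show x + (q.toNat : ℤ) * m = x + (m.toNat : ℤ) * q by
        rw [Int.toNat_of_nonneg hq0.le, Int.toNat_of_nonneg hm.le]; ring,
      show y + (q.toNat : ℤ) * n = y + q * n by
        rw [Int.toNat_of_nonneg hq0.le]] at e2
    exact e1.symm.trans e2
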